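/- arXiv:1507.00217 — 2 statements merged into one kernel-verified Lean document; each statement's English description precedes it below -/
import Mathlib

section
/- Define d : ℝ × (0,∞) → ℝ by d(x,t) = max{(t+1−|x−2|)₊, (t+1−|x+2|)₊} if t ≤ 1 and d(x,t) = (t+3−|x|)₊ if t > 1. Then for every x with |x| < 2, the function d is lower semicontinuous but not upper semicontinuous at the point (x, 1); in particular, d is discontinuous at (x,1). -/
theorem distance_discontinuous_at_extinction
    (d : ℝ × ℝ → ℝ)
    (hd : ∀ p : ℝ × ℝ, 0 < p.2 →
      d p = if p.2 ≤ 1 then max (max (p.2 + 1 - |p.1 - 2|) 0) (max (p.2 + 1 - |p.1 + 2|) 0)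
            else max (p.2 + 3 - |p.1|) 0)
    (x : ℝ) (hx : |x| < 2) :
    LowerSemicontinuousWithinAt d (Set.univ ×ˢ Set.Ioi (0 : ℝ)) (x, 1) ∧
    ¬ UpperSemicontinuousWithinAt d (Set.univ ×ˢ Set.Ioi (0 : ℝ)) (x, 1) ∧
    ¬ ContinuousWithinAt d (Set.univ ×ˢ Set.Ioi (0 : ℝ)) (x, 1) := by
  have hxlt := abs_lt.mp hx
  set s : Set (ℝ × ℝ) := Set.univ ×ˢ Set.Ioi (0 : ℝ) with hs
  set g : ℝ × ℝ → ℝ := fun p =>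
    max (max (p.2 + 1 - |p.1 - 2|) 0) (max (p.2 + 1 - |p.1 + 2|) 0) with hgdef
  have hgcont : Continuous g := by fun_prop
  -- value at the point
  have hd1 : d (x, 1) = |x| := by
    rw [hd (x, 1) one_pos]
    simp only [if_pos le_rfl]
    have h2 : |x - 2| = 2 - x := by rw [abs_of_nonpos (by linarith : x - 2 ≤ 0)]; ring
    have h3 : |x + 2| = x + 2 := abs_of_nonneg (by linarith)
    rw [h2, h3]
    rcases abs_cases x with ⟨h, h'⟩ | ⟨h, h'⟩ <;> rw [h] <;>
      rcases le_total 0 x with h0 | h0 <;>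
      simp [max_def] <;> split_ifs <;> linarith
  -- d dominates g on s
  have hge : ∀ p : ℝ × ℝ, 0 < p.2 → g p ≤ d p := by
    intro p hp
    rw [hd p hp]
    split_ifs with h
    · exact le_rfl
    · have h1 : |p.1| - |p.1 - 2| ≤ 2 := by
        calc |p.1| - |p.1 - 2| ≤ |p.1 - (p.1 - 2)| := abs_sub_abs_le_abs_sub _ _
          _ = 2 := by norm_num
      have h2 : |p.1| - |p.1 + 2| ≤ 2 := by
        calc |p.1| - |p.1 + 2| ≤ |p.1 - (p.1 + 2)| := abs_sub_abs_le_abs_sub _ _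
          _ = 2 := by rw [show p.1 - (p.1 + 2) = -2 by ring]; norm_num
      refine max_le (max_le ?_ (le_max_right _ _)) (max_le ?_ (le_max_right _ _))
      · exact le_trans (by linarith) (le_max_left (p.2 + 3 - |p.1|) 0)
      · exact le_trans (by linarith) (le_max_left (p.2 + 3 - |p.1|) 0)
  have hg1 : g (x, 1) = |x| := by
    rw [← hd1, hd (x, 1) one_pos]; simp [hgdef]
  -- the bad sequence
  have hseq_mem : ∀ n : ℕ, (((x, 1 + 1 / (n + 1)) : ℝ × ℝ)) ∈ s := by
    intro n
    refine ⟨Set.mem_univ _, ?_⟩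
    show (0:ℝ) < 1 + 1 / (n + 1)
    positivity
  have hseq_tendsto : Filter.Tendsto (fun n : ℕ => ((x, 1 + 1 / (n + 1)) : ℝ × ℝ))
      Filter.atTop (nhdsWithin (x, 1) s) := by
    rw [tendsto_nhdsWithin_iff]
    constructor
    · rw [Prod.tendsto_iff]
      constructor
      · simpa using tendsto_const_nhds
      · have : Filter.Tendsto (fun n : ℕ => (1 : ℝ) + 1 / (n + 1)) Filter.atTop (nhds (1 + 0)) :=
          Filter.Tendsto.const_add _ tendsto_one_div_add_atTop_nhds_zero_nat
        simpa using this
    · exact Filter.Eventually.of_forall hseq_mem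
  have hseq_val : ∀ n : ℕ, (2 : ℝ) ≤ d (x, 1 + 1 / (n + 1)) := by
    intro n
    have hpos : (0 : ℝ) < 1 / (n + 1) := by positivity
    rw [hd _ (show (0:ℝ) < ((x, 1 + 1 / (n + 1)) : ℝ × ℝ).2 by simp only; positivity)]
    simp only
    rw [if_neg (by push_neg; linarith)]
    exact le_trans (by linarith) (le_max_left _ _)
  have husc : ¬ UpperSemicontinuousWithinAt d s (x, 1) := by
    intro h
    have h2 : ∀ᶠ p in nhdsWithin (x, 1) s, d p < 2 := h 2 (by show d (x, 1) < 2; rw [hd1]; exact hx)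
    have h3 : ∀ᶠ n : ℕ in Filter.atTop, d (x, 1 + 1 / (n + 1)) < 2 :=
      hseq_tendsto.eventually h2
    rcases h3.exists with ⟨n, hn⟩
    exact absurd (hseq_val n) (not_le.mpr hn)
  refine ⟨?_, husc, fun h => husc h.upperSemicontinuousWithinAt⟩
  intro y hy
  have hy' : y < g (x, 1) := by rwa [hg1, ← hd1]
  have : ∀ᶠ p in nhds ((x, 1) : ℝ × ℝ), y < g p :=
    ContinuousAt.eventually_lt continuousAt_const (hgcont.continuousAt (x := ((x, 1) : ℝ × ℝ))) hy'
  have h4 : ∀ᶠ p in nhdsWithin (x, 1) s, y < g p := this.filter_mono nhdsWithin_le_nhds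
  filter_upwards [h4, self_mem_nhdsWithin] with p hp hps
  exact lt_of_lt_of_le hp (hge p hps.2)
end

section
/- Define, for x ∈ ℝ and t ≥ log 2, w(x,t) = 1 if |x| ≤ t + 1 − log 2, w(x,t) = e^{t−|x|+1} − 1 if t + 1 − log 2 ≤ |x| ≤ t + 1, and w(x,t) = 0 if |x| ≥ t + 1; and define d(x,t) = (t + 1 − |x|)₊. Then: (i) w is well-defined (the three formulas agree on overlaps) and continuous; (ii) {x : w(x,t) = 0} = {x : |x| ≥ t+1}; (iii) whenever |x| = t + 1 − log 2 ≥ 1, one has d(x,t) = log 2 < 1 = w(x,t). -/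
theorem counterexample_w_exceeds_distance
    (w d : ℝ → ℝ → ℝ)
    (hw : ∀ x t : ℝ, Real.log 2 ≤ t →
      w x t = if |x| ≤ t + 1 - Real.log 2 then 1
              else if |x| ≤ t + 1 then Real.exp (t - |x| + 1) - 1 else 0)
    (hd : ∀ x t : ℝ, d x t = max (t + 1 - |x|) 0) :
    -- (i) the three formulas agree on overlaps
    (∀ x t : ℝ, Real.log 2 ≤ t → |x| = t + 1 - Real.log 2 →
        Real.exp (t - |x| + 1) - 1 = 1) ∧
    (∀ x t : ℝ, Real.log 2 ≤ t → |x| = t + 1 →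
        Real.exp (t - |x| + 1) - 1 = 0) ∧
    -- (i) continuity on { (x,t) : log 2 ≤ t }
    ContinuousOn (fun p : ℝ × ℝ => w p.1 p.2) {p : ℝ × ℝ | Real.log 2 ≤ p.2} ∧
    -- (ii) zero level set
    (∀ t : ℝ, Real.log 2 ≤ t → {x : ℝ | w x t = 0} = {x : ℝ | t + 1 ≤ |x|}) ∧
    -- (iii) w exceeds d where |x| = t + 1 - log 2 ≥ 1
    (∀ x t : ℝ, Real.log 2 ≤ t → |x| = t + 1 - Real.log 2 → 1 ≤ |x| →
        d x t = Real.log 2 ∧ Real.log 2 < 1 ∧ w x t = 1) := by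
  have hlog2 : Real.exp (Real.log 2) = 2 := Real.exp_log (by norm_num)
  have hlogpos : (0:ℝ) < Real.log 2 := Real.log_pos (by norm_num)
  refine ⟨?_, ?_, ?_, ?_, ?_⟩
  · intro x t _ hx
    have : t - |x| + 1 = Real.log 2 := by rw [hx]; ring
    rw [this, hlog2]; norm_num
  · intro x t _ hx
    have : t - |x| + 1 = 0 := by rw [hx]; ring
    rw [this, Real.exp_zero]; norm_num
  · -- continuity
    have hg : Continuous (fun p : ℝ × ℝ =>
        min 1 (max 0 (Real.exp (p.2 - |p.1| + 1) - 1))) := by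
      apply continuous_const.min
      apply continuous_const.max
      exact ((Real.continuous_exp.comp
        ((continuous_snd.sub (continuous_abs.comp continuous_fst)).add
          continuous_const)).sub continuous_const)
    apply ContinuousOn.congr hg.continuousOn
    intro p hp
    obtain ⟨x, t⟩ := p
    simp only [Set.mem_setOf_eq] at hp
    show w x t = _
    rw [hw x t hp]
    by_cases h1 : |x| ≤ t + 1 - Real.log 2
    · have he : (2:ℝ) ≤ Real.exp (t - |x| + 1) := by
        rw [← hlog2]
        exact Real.exp_le_exp.mpr (by linarith)
      simp only [if_pos h1]
      rw [max_eq_right (by linarith), min_eq_left (by linarith)]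
    · push_neg at h1
      by_cases h2 : |x| ≤ t + 1
      · have h0 : (0:ℝ) ≤ t - |x| + 1 := by linarith
        have he1 : (1:ℝ) ≤ Real.exp (t - |x| + 1) := Real.one_le_exp h0
        have he2 : Real.exp (t - |x| + 1) ≤ 2 := by
          rw [← hlog2]
          exact Real.exp_le_exp.mpr (by linarith)
        simp only [if_neg (not_le.mpr h1), if_pos h2]
        rw [max_eq_right (by linarith), min_eq_right (by linarith)]
      · push_neg at h2
        have he : Real.exp (t - |x| + 1) ≤ 1 :=
          Real.exp_le_one_iff.mpr (by linarith)
        simp only [if_neg (not_le.mpr h1), if_neg (not_le.mpr h2)]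
        rw [max_eq_left (by linarith), min_eq_right (by norm_num)]
  · intro t ht
    ext x
    simp only [Set.mem_setOf_eq]
    rw [hw x t ht]
    by_cases h1 : |x| ≤ t + 1 - Real.log 2
    · simp only [if_pos h1]
      constructor
      · intro h; norm_num at h
      · intro h; linarith
    · push_neg at h1
      by_cases h2 : |x| ≤ t + 1
      · simp only [if_neg (not_le.mpr h1), if_pos h2]
        constructor
        · intro h
          have h' : Real.exp (t - |x| + 1) = Real.exp 0 := by
            rw [Real.exp_zero]; linarith
          have := Real.exp_injective h'
          linarith
        · intro h
          have hx : |x| = t + 1 := le_antisymm h2 h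
          have : t - |x| + 1 = 0 := by rw [hx]; ring
          rw [this, Real.exp_zero]; norm_num
      · push_neg at h2
        rw [if_neg (not_le.mpr h1), if_neg (not_le.mpr h2)]
        exact iff_of_true rfl h2.le
  · intro x t ht hx _
    have hlt1 : Real.log 2 < 1 :=
      lt_trans Real.log_two_lt_d9 (by norm_num)
    refine ⟨?_, hlt1, ?_⟩
    · rw [hd, hx]
      have : t + 1 - (t + 1 - Real.log 2) = Real.log 2 := by ring
      rw [this, max_eq_left hlogpos.le]
    · rw [hw x t ht, if_pos hx.le]
end
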